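/- Let M : Matrix (Fin d) (Fin d) ℝ be symmetric (M = Mᵀ) with all entries nonnegative, and let σ(M) : Matrix (Fin d × Fin d) (Fin d × Fin d) ℂ be the diagonal matrix with σ(M) (i,j) (i,j) = M i j and all other entries 0. Then the least r ∈ ℕ such that there exist d' ∈ ℕ and C k : Matrix (Fin d) (Fin d') ℂ (k < r) with L = Σ_{k<r} C k ⊗ₖ C k satisfying L * Lᴴ = σ(M) equals the complex completely positive semidefinite transposed rank cpsdt-rank^ℂ(M), i.e. the least r such that there exist positive semidefinite E i : Matrix (Fin r) (Fin r) ℂ (i : Fin d) with (M i j : ℂ) = Matrix.trace (E i * (E j)ᵀ) for all i, j. -/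

import Mathlib

open Matrix Kronecker
open scoped BigOperators ComplexOrder

private lemma sum_comm4 {α β γ δ M : Type*} [Fintype α][Fintype β][Fintype γ][Fintype δ]
    [AddCommMonoid M] (f : α → β → γ → δ → M) :
    ∑ a, ∑ b, ∑ c, ∑ d, f a b c d = ∑ c, ∑ d, ∑ a, ∑ b, f a b c d := by
  have h1 : ∀ a : α, (∑ b, ∑ c, ∑ d, f a b c d) = ∑ c, ∑ b, ∑ d, f a b c d :=
    fun a => Finset.sum_comm
  simp_rw [h1]
  rw [Finset.sum_comm]
  refine Finset.sum_congr rfl fun c _ => ?_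
  have h2 : ∀ a : α, (∑ b, ∑ d, f a b c d) = ∑ d, ∑ b, f a b c d :=
    fun a => Finset.sum_comm
  simp_rw [h2]
  exact Finset.sum_comm

private lemma key1 {ι κ : Type*} [Fintype ι] [Fintype κ] (f g : ι → κ → ℂ) :
    (∑ k, ∑ l, (∑ a, f k a * star (f l a)) * (∑ b, g k b * star (g l b)))
    = ∑ a, ∑ b, (∑ k, f k a * g k b) * star (∑ l, f l a * g l b) := by
  simp only [Finset.sum_mul_sum, star_sum, star_mul', Finset.mul_sum, Finset.sum_mul]
  have h1 : ∀ (k l : ι), (∑ b, ∑ a, f k a * star (f l a) * (g k b * star (g l b)))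
      = ∑ a, ∑ b, f k a * star (f l a) * (g k b * star (g l b)) :=
    fun k l => Finset.sum_comm
  simp_rw [h1]
  rw [sum_comm4]
  refine Finset.sum_congr rfl fun a _ => Finset.sum_congr rfl fun b _ => ?_
  rw [Finset.sum_comm]
  exact Finset.sum_congr rfl fun l _ => Finset.sum_congr rfl fun k _ => by ring

private lemma trace_mul_transpose_sum {r : ℕ} (P Q : Matrix (Fin r) (Fin r) ℂ) :
    Matrix.trace (P * Qᵀ) = ∑ k, ∑ l, P k l * Q k l := by
  simp [Matrix.trace, Matrix.diag, Matrix.mul_apply, Matrix.transpose_apply]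

/-- The diagonal psd matrix associated to a nonnegative symmetric matrix `M`. -/
noncomputable def sigmaM {d : ℕ} (M : Matrix (Fin d) (Fin d) ℝ) :
    Matrix (Fin d × Fin d) (Fin d × Fin d) ℂ :=
  Matrix.diagonal (fun p : Fin d × Fin d => (M p.1 p.2 : ℂ))

/-- The symmetric (t.i.) purification rank of `σ(M)` equals the complex cpsdt rank of `M`. -/
theorem tiPuriRank_sigmaM_eq_cpsdtRank {d : ℕ} (M : Matrix (Fin d) (Fin d) ℝ)
    (hsymm : M = Mᵀ) (hM : ∀ i j, 0 ≤ M i j) :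
    sInf {r : ℕ | ∃ (d' : ℕ) (C : Fin r → Matrix (Fin d) (Fin d') ℂ),
        (∑ k, C k ⊗ₖ C k) * (∑ k, C k ⊗ₖ C k)ᴴ = sigmaM M} =
    sInf {r : ℕ | ∃ E : Fin d → Matrix (Fin r) (Fin r) ℂ,
        (∀ i, (E i).PosSemidef) ∧
        ∀ i j, (M i j : ℂ) = Matrix.trace (E i * (E j)ᵀ)} := by
  congr 1
  ext r
  simp only [Set.mem_setOf_eq]
  constructor
  · -- purification → cpsdt
    rintro ⟨d', C, hL⟩
    refine ⟨fun i => Matrix.of fun k l => ∑ a, C k i a * star (C l i a), fun i => ?_, fun i j => ?_⟩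
    · show (Matrix.of fun k l => ∑ a, C k i a * star (C l i a)).PosSemidef
      have : (Matrix.of fun k l => ∑ a, C k i a * star (C l i a))
          = (Matrix.of fun k a => C k i a) * (Matrix.of fun k a => C k i a)ᴴ := by
        ext k l
        simp [Matrix.mul_apply, Matrix.conjTranspose_apply]
      rw [this]
      exact Matrix.posSemidef_self_mul_conjTranspose _
    · dsimp only
      have h := congrFun (congrFun hL (i, j)) (i, j)
      simp only [sigmaM, Matrix.diagonal_apply_eq] at h
      rw [← h]
      rw [trace_mul_transpose_sum]
      simp only [Matrix.of_apply]
      rw [key1 (fun k a => C k i a) (fun k b => C k j b)]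
      simp only [Matrix.mul_apply, Matrix.conjTranspose_apply, Matrix.sum_apply,
        Matrix.kroneckerMap_apply, Fintype.sum_prod_type]
  · -- cpsdt → purification
    rintro ⟨E, hpsd, htr⟩
    set e := finProdFinEquiv (m := d) (n := r) with he
    open scoped MatrixOrder in
    set A : Fin d → Matrix (Fin r) (Fin r) ℂ := fun i => CFC.sqrt (E i) with hA
    open scoped MatrixOrder in
    have hAE : ∀ i, A i * A i = E i := fun i => CFC.sqrt_mul_sqrt_self (E i) (hpsd i).nonneg
    open scoped MatrixOrder in
    have hherm : ∀ i, (A i)ᴴ = A i := fun i => (CFC.sqrt_nonneg (E i)).posSemidef.isHermitian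
    have hstar : ∀ i s l, star (A i s l) = A i l s := by
      intro i s l
      rw [← Matrix.conjTranspose_apply, hherm]
    refine ⟨d * r, fun k => Matrix.of fun i c =>
      if i = (e.symm c).1 then A i (e.symm c).2 k else 0, ?_⟩
    ext ⟨i, j⟩ ⟨i', j'⟩
    rw [Matrix.mul_apply]
    have hterm : ∀ (x y : Fin d) (p : Fin (d * r) × Fin (d * r)),
        (∑ k, ((fun k => Matrix.of fun i c =>
            if i = (e.symm c).1 then A i (e.symm c).2 k else 0) k ⊗ₖ (fun k => Matrix.of fun i c =>
            if i = (e.symm c).1 then A i (e.symm c).2 k else 0) k)) (x, y) p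
          = if x = (e.symm p.1).1 ∧ y = (e.symm p.2).1 then
              ∑ k, A x (e.symm p.1).2 k * A y (e.symm p.2).2 k else 0 := by
      intro x y p
      simp only [Matrix.sum_apply, Matrix.kroneckerMap_apply, Matrix.of_apply]
      by_cases h1 : x = (e.symm p.1).1 <;> by_cases h2 : y = (e.symm p.2).1 <;>
        simp [h1, h2]
    simp only [Matrix.conjTranspose_apply, hterm]
    rw [← Equiv.sum_comp (Equiv.prodCongr e e)
      (fun p : Fin (d * r) × Fin (d * r) =>
        (if i = (e.symm p.1).1 ∧ j = (e.symm p.2).1 then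
            ∑ k, A i (e.symm p.1).2 k * A j (e.symm p.2).2 k else 0) *
        star (if i' = (e.symm p.1).1 ∧ j' = (e.symm p.2).1 then
            ∑ k, A i' (e.symm p.1).2 k * A j' (e.symm p.2).2 k else 0))]
    simp only [Equiv.prodCongr_apply, Prod.map_fst, Prod.map_snd, Equiv.symm_apply_apply]
    by_cases hpq : i = i' ∧ j = j'
    · obtain ⟨rfl, rfl⟩ := hpq
      have hcol : ∀ q : (Fin d × Fin r) × (Fin d × Fin r),
          (if i = q.1.1 ∧ j = q.2.1 then ∑ k, A i q.1.2 k * A j q.2.2 k else 0) *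
            star (if i = q.1.1 ∧ j = q.2.1 then ∑ k, A i q.1.2 k * A j q.2.2 k else 0)
          = if i = q.1.1 ∧ j = q.2.1 then
              (∑ k, A i q.1.2 k * A j q.2.2 k) * star (∑ k, A i q.1.2 k * A j q.2.2 k)
            else 0 := by
        intro q; split_ifs <;> simp
      simp only [hcol, sigmaM, Matrix.diagonal_apply_eq]
      have hcollapse :
          (∑ q : (Fin d × Fin r) × (Fin d × Fin r),
            if i = q.1.1 ∧ j = q.2.1 then
              (∑ k, A i q.1.2 k * A j q.2.2 k) * star (∑ k, A i q.1.2 k * A j q.2.2 k)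
            else 0)
          = ∑ s, ∑ t, (∑ k, A i s k * A j t k) * star (∑ k, A i s k * A j t k) := by
        rw [Fintype.sum_prod_type]
        simp [Fintype.sum_prod_type, ite_and, Finset.sum_ite_irrel, Finset.sum_ite_eq]
      rw [hcollapse]
      have hk := key1 (fun k s => A i s k) (fun k t => A j t k)
      rw [← hk]
      have hEi : ∀ k l : Fin r, (∑ s, A i s k * star (A i s l)) = E i l k := by
        intro k l
        simp_rw [hstar]
        rw [← hAE i, Matrix.mul_apply]
        exact Finset.sum_congr rfl fun s _ => mul_comm _ _
      have hEj : ∀ k l : Fin r, (∑ t, A j t k * star (A j t l)) = E j l k := by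
        intro k l
        simp_rw [hstar]
        rw [← hAE j, Matrix.mul_apply]
        exact Finset.sum_congr rfl fun t _ => mul_comm _ _
      simp_rw [hEi, hEj]
      rw [Finset.sum_comm]
      rw [htr i j, trace_mul_transpose_sum]
    · have hne : ((i, j) : Fin d × Fin d) ≠ (i', j') := by
        simp only [Ne, Prod.mk.injEq]; exact hpq
      rw [sigmaM, Matrix.diagonal_apply_ne _ hne]
      refine Finset.sum_eq_zero fun q _ => ?_
      by_cases h1 : i = q.1.1 ∧ j = q.2.1 <;> by_cases h2 : i' = q.1.1 ∧ j' = q.2.1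
      · exact absurd ⟨h1.1.trans h2.1.symm, h1.2.trans h2.2.symm⟩ hpq
      · simp [h1, h2]
      · simp [h1, h2]
      · simp [h1, h2]
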